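/- Every pair of monotone maps f₀, f₁ : A → B between partial orders has a coinserter c : B → C, and this coinserter c is a surjective map. -/

import Mathlib

universe u

/-- `IsCoinserter f₀ f₁ c` says that the monotone map `c : B →o C` is a coinserter of the
parallel pair of monotone maps `f₀, f₁ : A →o B` in the category of partial orders and
monotone maps: `c ∘ f₀ ≤ c ∘ f₁` pointwise, every monotone map `g` with `g ∘ f₀ ≤ g ∘ f₁`
pointwise factors through `c`, and `c` is order-epic. -/
def IsCoinserter {A B C : Type u} [PartialOrder A] [PartialOrder B] [PartialOrder C]
    (f₀ f₁ : A →o B) (c : B →o C) : Prop :=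
  (∀ a, c (f₀ a) ≤ c (f₁ a)) ∧
  (∀ (D : Type u) (_ : PartialOrder D) (g : B →o D),
    (∀ a, g (f₀ a) ≤ g (f₁ a)) → ∃ h : C →o D, ∀ b, g b = h (c b)) ∧
  (∀ (D : Type u) (_ : PartialOrder D) (u₀ v₀ : C →o D),
    (∀ b, u₀ (c b) ≤ v₀ (c b)) → ∀ x, u₀ x ≤ v₀ x)


section Coinserter

variable {A B : Type u} [PartialOrder A] [PartialOrder B] (f₀ f₁ : A →o B)

/-- The preorder on `B` generated by `≤` and `f₀ a ≤ f₁ a`. -/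
inductive CoinsRel : B → B → Prop
  | of_le {b b' : B} : b ≤ b' → CoinsRel b b'
  | step (a : A) : CoinsRel (f₀ a) (f₁ a)
  | trans {b₁ b₂ b₃ : B} : CoinsRel b₁ b₂ → CoinsRel b₂ b₃ → CoinsRel b₁ b₃

lemma coinsRel_refl (b : B) : CoinsRel f₀ f₁ b b := CoinsRel.of_le le_rfl

def coinsSetoid : Setoid B where
  r b b' := CoinsRel f₀ f₁ b b' ∧ CoinsRel f₀ f₁ b' b
  iseqv := ⟨fun b => ⟨coinsRel_refl f₀ f₁ b, coinsRel_refl f₀ f₁ b⟩,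
    fun h => ⟨h.2, h.1⟩,
    fun h h' => ⟨h.1.trans h'.1, h'.2.trans h.2⟩⟩

lemma coinsRel_mono {D : Type u} [PartialOrder D] (g : B →o D)
    (hg : ∀ a, g (f₀ a) ≤ g (f₁ a)) {b b' : B} (h : CoinsRel f₀ f₁ b b') : g b ≤ g b' := by
  induction h with
  | of_le h => exact g.monotone h
  | step a => exact hg a
  | trans _ _ ih₁ ih₂ => exact ih₁.trans ih₂

end Coinserter

/-- Every parallel pair of monotone maps `f₀, f₁ : A →o B` between partial orders has a
coinserter `c : B →o C`, and this coinserter is a surjective map. -/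
theorem exists_coinserter_surjective {A B : Type u} [PartialOrder A] [PartialOrder B]
    (f₀ f₁ : A →o B) :
    ∃ (C : Type u) (_ : PartialOrder C) (c : B →o C),
      IsCoinserter f₀ f₁ c ∧ Function.Surjective c := by
  classical
  let S := coinsSetoid f₀ f₁
  let C := Quotient S
  have hle : ∀ (b₁ b₂ b₁' b₂' : B), S.r b₁ b₁' → S.r b₂ b₂' →
      (CoinsRel f₀ f₁ b₁ b₂) = (CoinsRel f₀ f₁ b₁' b₂') := by
    intro b₁ b₂ b₁' b₂' h₁ h₂
    apply propext
    exact ⟨fun h => (h₁.2.trans h).trans h₂.1, fun h => (h₁.1.trans h).trans h₂.2⟩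
  let le : C → C → Prop := Quotient.lift₂ (fun b b' => CoinsRel f₀ f₁ b b') hle
  have le_mk : ∀ b b' : B, le ⟦b⟧ ⟦b'⟧ = CoinsRel f₀ f₁ b b' := fun _ _ => rfl
  let inst : PartialOrder C := {
    le := le
    lt := fun x y => le x y ∧ ¬ le y x
    lt_iff_le_not_ge := fun _ _ => Iff.rfl
    le_refl := fun x => Quotient.inductionOn x (fun b => coinsRel_refl f₀ f₁ b)
    le_trans := fun x y z => Quotient.inductionOn₃ x y z (fun _ _ _ h h' => CoinsRel.trans h h')
    le_antisymm := fun x y => Quotient.inductionOn₂ x y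
      (fun b b' h h' => Quotient.sound ⟨h, h'⟩) }
  let c : @OrderHom B C _ inst.toPreorder :=
    @OrderHom.mk B C _ inst.toPreorder (fun b => ⟦b⟧) (fun _ _ h => CoinsRel.of_le h)
  refine ⟨C, inst, c, ⟨fun a => CoinsRel.step a, ?_, ?_⟩, fun x => Quotient.inductionOn x
    (fun b => ⟨b, rfl⟩)⟩
  · intro D _ g hg
    have hwd : ∀ b b' : B, S.r b b' → g b = g b' := fun b b' h =>
      le_antisymm (coinsRel_mono f₀ f₁ g hg h.1) (coinsRel_mono f₀ f₁ g hg h.2)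
    refine ⟨@OrderHom.mk C D inst.toPreorder _ (Quotient.lift g hwd) (fun x y => Quotient.inductionOn₂ x y
      (fun b b' h => coinsRel_mono f₀ f₁ g hg h)), fun b => rfl⟩
  · intro D _ u v h x
    exact Quotient.inductionOn x (fun b => h b)
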